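/- In a quasitriangular Hopf algebra A with R-matrix ρ = Σ e⊗e', for all a ∈ A: Σ e ⊗ ae' = Σ s⁻¹(a₃)ea₁ ⊗ e'a₂. -/

import Mathlib

open scoped TensorProduct
open Coalgebra HopfAlgebra

section Aux

variable {k : Type*} [Field k] {A : Type*} [Ring A] [HopfAlgebra k A]

lemma repr_sum_counit_smul_right {a : A} (r : Coalgebra.Repr k a (A × A)) :
    ∑ i ∈ r.index, counit (R := k) (r.left i) • r.right i = a := by
  have h := Coalgebra.sum_counit_tmul_eq r
  apply_fun (TensorProduct.lid k A) at h
  simp only [map_sum, TensorProduct.lid_tmul] at h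
  simpa using h

lemma repr_sum_counit_smul_left {a : A} (r : Coalgebra.Repr k a (A × A)) :
    ∑ i ∈ r.index, counit (R := k) (r.right i) • r.left i = a := by
  have h := Coalgebra.sum_tmul_counit_eq r
  apply_fun (TensorProduct.rid k A) at h
  simp only [map_sum, TensorProduct.rid_tmul] at h
  simpa using h

lemma comul_mul_repr {x u : A} (rx : Coalgebra.Repr k x (A × A)) (ru : Coalgebra.Repr k u (A × A)) :
    Coalgebra.comul (R := k) (x * u)
      = ∑ p ∈ rx.index, ∑ q ∈ ru.index,
          (rx.left p * ru.left q) ⊗ₜ[k] (rx.right p * ru.right q) := by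
  rw [Bialgebra.comul_mul, ← rx.eq, ← ru.eq, Finset.sum_mul_sum]
  simp [Algebra.TensorProduct.tmul_mul_tmul]

lemma counit_insert {x u : A} (rx : Coalgebra.Repr k x (A × A)) (ru : Coalgebra.Repr k u (A × A)) :
    (counit (R := k) x * counit (R := k) u) • (1 : A)
      = ∑ p ∈ rx.index, ∑ q ∈ ru.index,
          antipode (R := k) (rx.left p * ru.left q) * (rx.right p * ru.right q) := by
  have h := HopfAlgebra.mul_antipode_rTensor_comul_apply (R := k) (A := A) (x * u)
  rw [comul_mul_repr rx ru] at h
  simp only [map_sum, LinearMap.rTensor_tmul, LinearMap.mul'_apply] at h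
  rw [h, Bialgebra.counit_mul, Algebra.algebraMap_eq_smul_one]

lemma S_one : antipode (R := k) (A := A) 1 = 1 := by
  have h := HopfAlgebra.mul_antipode_rTensor_comul_apply (R := k) (A := A) 1
  rw [Bialgebra.comul_one, Bialgebra.counit_one, Algebra.TensorProduct.one_def] at h
  simpa using h

noncomputable def m3 : A ⊗[k] (A ⊗[k] A) →ₗ[k] A :=
  LinearMap.mul' k A ∘ₗ LinearMap.lTensor A (LinearMap.mul' k A)

@[simp] lemma m3_tmul (x y z : A) : m3 (k := k) (x ⊗ₜ[k] (y ⊗ₜ[k] z)) = x * (y * z) := rfl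

lemma antipode_antimul (a b : A) :
    antipode (R := k) (a * b) = antipode (R := k) b * antipode (R := k) a := by
  classical
  set S : A →ₗ[k] A := antipode (R := k) (A := A) with hS
  let ra := ℛ k a
  let rb := ℛ k b
  let rx : ∀ i, Coalgebra.Repr k (ra.left i) (A × A) := fun i => ℛ k (ra.left i)
  let ry : ∀ i, Coalgebra.Repr k (ra.right i) (A × A) := fun i => ℛ k (ra.right i)
  let ru : ∀ j, Coalgebra.Repr k (rb.left j) (A × A) := fun j => ℛ k (rb.left j)
  let rv : ∀ j, Coalgebra.Repr k (rb.right j) (A × A) := fun j => ℛ k (rb.right j)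
  -- Step A : a-side coassociativity
  have EA := Coalgebra.sum_map_tmul_tmul_eq
      (S ∘ₗ LinearMap.mulRight k b) (LinearMap.id (R := k) (M := A)) S a
      (repr := ra) (a₁ := rx) (a₂ := ry)
  have A1 := congrArg (m3 (k := k)) EA
  simp only [map_sum, m3_tmul, LinearMap.comp_apply, LinearMap.id_apply,
    LinearMap.mulRight_apply] at A1
  -- A1 : ∑ i, ∑ q ∈ (ry i).index, S (ra.left i * b) * ((ry i).left q * S ((ry i).right q))
  --    = ∑ i, ∑ p ∈ (rx i).index, S ((rx i).left p * b) * ((rx i).right p * S (ra.right i))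
  -- LHS of A1 is S (a * b):
  have hA : S (a * b)
      = ∑ i ∈ ra.index, ∑ p ∈ (rx i).index,
          S ((rx i).left p * b) * ((rx i).right p * S (ra.right i)) := by
    rw [← A1]
    have : ∀ i ∈ ra.index,
        ∑ q ∈ (ry i).index, S (ra.left i * b) * ((ry i).left q * S ((ry i).right q))
          = counit (R := k) (ra.right i) • S (ra.left i * b) := by
      intro i _
      rw [← Finset.mul_sum, HopfAlgebra.sum_mul_antipode_eq_smul (ry i)]
      rw [mul_smul_comm, mul_one]
    rw [Finset.sum_congr rfl this]
    have e1 : ∑ i ∈ ra.index, counit (R := k) (ra.right i) • S (ra.left i * b)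
        = S ((∑ i ∈ ra.index, counit (R := k) (ra.right i) • ra.left i) * b) := by
      rw [Finset.sum_mul, map_sum]
      exact Finset.sum_congr rfl fun i _ => by rw [smul_mul_assoc, map_smul]
    rw [e1, repr_sum_counit_smul_left ra]
  -- Step B : b-side coassociativity, for fixed i, p
  have hB : ∀ i ∈ ra.index, ∀ p ∈ (rx i).index,
      S ((rx i).left p * b) * ((rx i).right p * S (ra.right i))
        = ∑ j ∈ rb.index, ∑ q ∈ (ru j).index,
            S ((rx i).left p * (ru j).left q)
              * (((rx i).right p * (ru j).right q) * (S (rb.right j) * S (ra.right i))) := by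
    intro i _ p _
    have EB := Coalgebra.sum_map_tmul_tmul_eq
        (S ∘ₗ LinearMap.mulLeft k ((rx i).left p))
        (LinearMap.mulLeft k ((rx i).right p))
        (LinearMap.mulRight k (S (ra.right i)) ∘ₗ S) b
        (repr := rb) (a₁ := ru) (a₂ := rv)
    have B1 := congrArg (m3 (k := k)) EB
    simp only [map_sum, m3_tmul, LinearMap.comp_apply, LinearMap.mulLeft_apply,
      LinearMap.mulRight_apply] at B1
    rw [← B1]
    -- now simplify LHS of B1 :
    -- ∑ j, ∑ q' ∈ (rv j).index, S(x1 * rb.left j) * ((x2 * (rv j).left q') * (S ((rv j).right q') * S yᵢ))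
    have h2 : ∀ j ∈ rb.index,
        ∑ q' ∈ (rv j).index,
          S ((rx i).left p * rb.left j)
            * (((rx i).right p * (rv j).left q') * (S ((rv j).right q') * S (ra.right i)))
        = counit (R := k) (rb.right j) •
            (S ((rx i).left p * rb.left j) * ((rx i).right p * S (ra.right i))) := by
      intro j _
      have : ∀ q' ∈ (rv j).index,
          S ((rx i).left p * rb.left j)
            * (((rx i).right p * (rv j).left q') * (S ((rv j).right q') * S (ra.right i)))
          = S ((rx i).left p * rb.left j)
            * ((rx i).right p * (((rv j).left q' * S ((rv j).right q')) * S (ra.right i))) := by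
        intro q' _; simp only [mul_assoc]
      rw [Finset.sum_congr rfl this, ← Finset.mul_sum, ← Finset.mul_sum, ← Finset.sum_mul,
        HopfAlgebra.sum_mul_antipode_eq_smul (rv j)]
      rw [smul_mul_assoc, one_mul, mul_smul_comm, mul_smul_comm]
    rw [Finset.sum_congr rfl h2]
    have : ∀ j ∈ rb.index,
        counit (R := k) (rb.right j) •
            (S ((rx i).left p * rb.left j) * ((rx i).right p * S (ra.right i)))
        = (S ((rx i).left p * (counit (R := k) (rb.right j) • rb.left j)))
            * ((rx i).right p * S (ra.right i)) := by
      intro j _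
      rw [mul_smul_comm, map_smul, smul_mul_assoc]
    rw [Finset.sum_congr rfl this, ← Finset.sum_mul]
    rw [show (∑ j ∈ rb.index, S ((rx i).left p * (counit (R := k) (rb.right j) • rb.left j)))
        = S ((rx i).left p * b) by
      rw [← map_sum, ← Finset.mul_sum, repr_sum_counit_smul_left rb]]
  -- Step C
  have hSa : S a = ∑ i ∈ ra.index, counit (R := k) (ra.left i) • S (ra.right i) := by
    conv_lhs => rw [← repr_sum_counit_smul_right ra]
    rw [map_sum]; simp only [map_smul]
  have hSb : S b = ∑ j ∈ rb.index, counit (R := k) (rb.left j) • S (rb.right j) := by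
    conv_lhs => rw [← repr_sum_counit_smul_right rb]
    rw [map_sum]; simp only [map_smul]
  have hC : S b * S a = ∑ j ∈ rb.index, ∑ i ∈ ra.index,
      (counit (R := k) (ra.left i) * counit (R := k) (rb.left j)) •
        (S (rb.right j) * S (ra.right i)) := by
    rw [hSa, hSb, Finset.sum_mul_sum]
    refine Finset.sum_congr rfl fun j _ => Finset.sum_congr rfl fun i _ => ?_
    rw [smul_mul_assoc, mul_smul_comm, smul_smul, mul_comm]
  have hins : ∀ j ∈ rb.index, ∀ i ∈ ra.index,
      (counit (R := k) (ra.left i) * counit (R := k) (rb.left j)) •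
        (S (rb.right j) * S (ra.right i))
      = ∑ p ∈ (rx i).index, ∑ q ∈ (ru j).index,
          S ((rx i).left p * (ru j).left q)
            * (((rx i).right p * (ru j).right q) * (S (rb.right j) * S (ra.right i))) := by
    intro j _ i _
    rw [← one_mul (S (rb.right j) * S (ra.right i)), ← smul_mul_assoc,
      counit_insert (rx i) (ru j)]
    simp only [Finset.sum_mul, mul_assoc, one_mul, ← hS]
  rw [hA, hC, Finset.sum_congr rfl (fun j hj => Finset.sum_congr rfl (fun i hi => hins j hj i hi))]
  rw [Finset.sum_congr rfl (fun i (hi : i ∈ ra.index) =>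
    Finset.sum_congr rfl (fun p hp => hB i hi p hp))]
  rw [Finset.sum_congr rfl (fun i (_ : i ∈ ra.index) => Finset.sum_comm)]
  exact Finset.sum_comm

lemma sInv_repr_sum (sInv : A →ₗ[k] A)
    (hsInv : ∀ x : A, sInv (HopfAlgebra.antipode (R := k) x) = x)
    (hsInv' : ∀ x : A, HopfAlgebra.antipode (R := k) (sInv x) = x)
    {x : A} (r : Coalgebra.Repr k x (A × A)) :
    ∑ i ∈ r.index, sInv (r.right i) * r.left i = counit (R := k) x • 1 := by
  have hinj : Function.Injective (antipode (R := k) (A := A)) := fun u v h => by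
    have := congrArg sInv h; simpa [hsInv] using this
  apply hinj
  rw [map_sum, map_smul, S_one]
  have : ∀ i ∈ r.index, antipode (R := k) (sInv (r.right i) * r.left i)
      = antipode (R := k) (r.left i) * r.right i := by
    intro i _; rw [antipode_antimul, hsInv']
  rw [Finset.sum_congr rfl this, HopfAlgebra.sum_antipode_mul_eq_smul r]


end Aux

/-- Bead push identity 2: `∑ e ⊗ a e' = ∑ s⁻¹(a₃) e a₁ ⊗ e' a₂`. -/
theorem bead_push_two
    {k : Type*} [Field k] {A : Type*} [Ring A] [HopfAlgebra k A]
    {ι : Type*} [Fintype ι] (e e' : ι → A)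
    (ρ : A ⊗[k] A) (hρ : ρ = ∑ j, e j ⊗ₜ[k] e' j)
    -- intertwining: ρ Δ(x) = Δᵒᵖ(x) ρ
    (h1 : ∀ x : A, ρ * Coalgebra.comul x
        = (TensorProduct.comm k A A) (Coalgebra.comul x) * ρ)
    (a : A) {κ : Type*} [Fintype κ] (a1 a2 a3 : κ → A)
    -- Δ²(a) = ∑ i, a₁ ⊗ a₂ ⊗ a₃
    (ha : (TensorProduct.map (Coalgebra.comul (R := k)) LinearMap.id) (Coalgebra.comul a)
        = ∑ i, (a1 i ⊗ₜ[k] a2 i) ⊗ₜ[k] a3 i)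
    (sInv : A →ₗ[k] A)
    (hsInv : ∀ x : A, sInv (HopfAlgebra.antipode (R := k) x) = x)
    (hsInv' : ∀ x : A, HopfAlgebra.antipode (R := k) (sInv x) = x) :
    ∑ j, e j ⊗ₜ[k] (a * e' j)
      = ∑ i, ∑ j, (sInv (a3 i) * e j * a1 i) ⊗ₜ[k] (e' j * a2 i) := by
  classical
  -- the linear maps F and G
  set F : (A ⊗[k] A) ⊗[k] A →ₗ[k] A ⊗[k] A :=
    LinearMap.rTensor A (LinearMap.mul' k A)
      ∘ₗ ((TensorProduct.assoc k A A A).symm : A ⊗[k] (A ⊗[k] A) ≃ₗ[k] _).toLinearMap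
      ∘ₗ LinearMap.rTensor (A ⊗[k] A) sInv
      ∘ₗ (TensorProduct.comm k (A ⊗[k] A) A).toLinearMap with hF
  have hFt : ∀ x y z : A, F ((x ⊗ₜ[k] y) ⊗ₜ[k] z) = (sInv z * x) ⊗ₜ[k] y := by
    intro x y z
    simp [hF, TensorProduct.comm_tmul, TensorProduct.assoc_symm_tmul]
  set G : (A ⊗[k] A) ⊗[k] A →ₗ[k] A ⊗[k] A :=
    LinearMap.rTensor A (LinearMap.mul' k A)
      ∘ₗ ((TensorProduct.assoc k A A A).symm : A ⊗[k] (A ⊗[k] A) ≃ₗ[k] _).toLinearMap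
      ∘ₗ LinearMap.rTensor (A ⊗[k] A) sInv
      ∘ₗ LinearMap.lTensor A (TensorProduct.comm k A A).toLinearMap
      ∘ₗ (TensorProduct.comm k (A ⊗[k] A) A).toLinearMap with hG
  have hGt : ∀ x y z : A, G ((x ⊗ₜ[k] y) ⊗ₜ[k] z) = (sInv z * y) ⊗ₜ[k] x := by
    intro x y z
    simp [hG, TensorProduct.comm_tmul, TensorProduct.assoc_symm_tmul]
  -- the intertwining in map form
  set P : A ⊗[k] A →ₗ[k] A ⊗[k] A := LinearMap.mulLeft k ρ with hP
  set Q : A ⊗[k] A →ₗ[k] A ⊗[k] A :=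
    LinearMap.mulRight k ρ ∘ₗ (TensorProduct.comm k A A).toLinearMap with hQ
  have key : (LinearMap.rTensor A P) ∘ₗ (TensorProduct.map (Coalgebra.comul (R := k)) LinearMap.id)
      = (LinearMap.rTensor A Q) ∘ₗ (TensorProduct.map (Coalgebra.comul (R := k)) LinearMap.id) := by
    apply TensorProduct.ext'
    intro x y
    simp only [LinearMap.comp_apply, TensorProduct.map_tmul, LinearMap.id_coe, id_eq,
      LinearMap.rTensor_tmul, hP, hQ, LinearMap.mulLeft_apply, LinearMap.mulRight_apply,
      LinearEquiv.coe_coe]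
    rw [h1 x]
  have star := LinearMap.congr_fun key (Coalgebra.comul (R := k) a)
  rw [LinearMap.comp_apply, LinearMap.comp_apply, ha, map_sum, map_sum] at star
  -- expand star into pure tensors
  have starL : ∀ i, LinearMap.rTensor A P ((a1 i ⊗ₜ[k] a2 i) ⊗ₜ[k] a3 i)
      = ∑ j, ((e j * a1 i) ⊗ₜ[k] (e' j * a2 i)) ⊗ₜ[k] a3 i := by
    intro i
    rw [LinearMap.rTensor_tmul]
    simp only [hP, LinearMap.mulLeft_apply, hρ, Finset.sum_mul,
      Algebra.TensorProduct.tmul_mul_tmul, TensorProduct.sum_tmul]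
  have starR : ∀ i, LinearMap.rTensor A Q ((a1 i ⊗ₜ[k] a2 i) ⊗ₜ[k] a3 i)
      = ∑ j, ((a2 i * e j) ⊗ₜ[k] (a1 i * e' j)) ⊗ₜ[k] a3 i := by
    intro i
    rw [LinearMap.rTensor_tmul]
    simp only [hQ, LinearMap.comp_apply, LinearEquiv.coe_coe, TensorProduct.comm_tmul,
      LinearMap.mulRight_apply, hρ, Finset.mul_sum,
      Algebra.TensorProduct.tmul_mul_tmul, TensorProduct.sum_tmul]
  rw [Finset.sum_congr rfl (fun i _ => starL i), Finset.sum_congr rfl (fun i _ => starR i)] at star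
  -- apply F to star
  have Fstar := congrArg F star
  rw [map_sum, map_sum] at Fstar
  simp only [map_sum, hFt] at Fstar
  -- Fstar : ∑ i, ∑ j, (sInv (a3 i) * (e j * a1 i)) ⊗ₜ (e' j * a2 i)
  --       = ∑ i, ∑ j, (sInv (a3 i) * (a2 i * e j)) ⊗ₜ (a1 i * e' j)
  -- key lemma K
  have hK : (∑ i, (sInv (a3 i) * a2 i) ⊗ₜ[k] a1 i) = (1 : A) ⊗ₜ[k] a := by
    have hGha := congrArg G ha
    rw [map_sum] at hGha
    simp only [hGt] at hGha
    rw [← hGha]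
    -- now compute G applied to (Δ ⊗ id)(Δ a) via coassociativity
    have hco : (TensorProduct.map (Coalgebra.comul (R := k)) (LinearMap.id (M := A)))
          (Coalgebra.comul a)
        = (TensorProduct.assoc k A A A).symm
            (LinearMap.lTensor A (Coalgebra.comul (R := k)) (Coalgebra.comul a)) := by
      rw [Coalgebra.coassoc_symm_apply]
      rfl
    rw [hco]
    rw [show G ((TensorProduct.assoc k A A A).symm
          (LinearMap.lTensor A (Coalgebra.comul (R := k)) (Coalgebra.comul a)))
        = (G ∘ₗ ((TensorProduct.assoc k A A A).symm : A ⊗[k] (A ⊗[k] A) ≃ₗ[k] _).toLinearMap)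
            (LinearMap.lTensor A (Coalgebra.comul (R := k)) (Coalgebra.comul a)) from rfl]
    set r := ℛ k a with hr
    set rc : ∀ i, Coalgebra.Repr k (r.right i) (A × A) := fun i => ℛ k (r.right i) with hrc
    have hlt : LinearMap.lTensor A (Coalgebra.comul (R := k)) (Coalgebra.comul a)
        = ∑ i ∈ r.index, ∑ q ∈ (rc i).index,
            r.left i ⊗ₜ[k] ((rc i).left q ⊗ₜ[k] (rc i).right q) := by
      rw [← r.eq, map_sum]
      refine Finset.sum_congr rfl fun i _ => ?_
      rw [LinearMap.lTensor_tmul, ← (rc i).eq, TensorProduct.tmul_sum]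
    rw [hlt]
    simp only [map_sum]
    have : ∀ i ∈ r.index,
        ∑ q ∈ (rc i).index,
          (G ∘ₗ ((TensorProduct.assoc k A A A).symm : A ⊗[k] (A ⊗[k] A) ≃ₗ[k] _).toLinearMap)
            (r.left i ⊗ₜ[k] ((rc i).left q ⊗ₜ[k] (rc i).right q))
        = counit (R := k) (r.right i) • ((1 : A) ⊗ₜ[k] r.left i) := by
      intro i _
      have : ∀ q ∈ (rc i).index,
          (G ∘ₗ ((TensorProduct.assoc k A A A).symm : A ⊗[k] (A ⊗[k] A) ≃ₗ[k] _).toLinearMap)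
              (r.left i ⊗ₜ[k] ((rc i).left q ⊗ₜ[k] (rc i).right q))
          = (sInv ((rc i).right q) * (rc i).left q) ⊗ₜ[k] r.left i := by
        intro q _
        rw [LinearMap.comp_apply, LinearEquiv.coe_coe, TensorProduct.assoc_symm_tmul, hGt]
      rw [Finset.sum_congr rfl this, ← TensorProduct.sum_tmul,
        sInv_repr_sum sInv hsInv hsInv' (rc i), ← TensorProduct.smul_tmul']
    rw [Finset.sum_congr rfl this]
    simp only [← TensorProduct.tmul_smul, ← TensorProduct.tmul_sum]
    rw [repr_sum_counit_smul_left r]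
  -- finish: rewrite RHS of Fstar using hK
  have final : (∑ i, ∑ j, (sInv (a3 i) * (a2 i * e j)) ⊗ₜ[k] (a1 i * e' j))
      = ∑ j, e j ⊗ₜ[k] (a * e' j) := by
    rw [Finset.sum_comm]
    refine Finset.sum_congr rfl fun j _ => ?_
    have : ∀ i, (sInv (a3 i) * (a2 i * e j)) ⊗ₜ[k] (a1 i * e' j)
        = ((sInv (a3 i) * a2 i) ⊗ₜ[k] a1 i) * (e j ⊗ₜ[k] e' j) := by
      intro i
      rw [Algebra.TensorProduct.tmul_mul_tmul, mul_assoc]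
    rw [Finset.sum_congr rfl (fun i _ => this i), ← Finset.sum_mul, hK,
      Algebra.TensorProduct.tmul_mul_tmul, one_mul]
  have goalRHS : (∑ i, ∑ j, (sInv (a3 i) * e j * a1 i) ⊗ₜ[k] (e' j * a2 i))
      = ∑ i, ∑ j, (sInv (a3 i) * (e j * a1 i)) ⊗ₜ[k] (e' j * a2 i) := by
    simp only [mul_assoc]
  rw [goalRHS, Fstar, final]
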